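/- If f : ℝ → ℝ is twice continuously differentiable at x, then the limit as Δ → 0 of −(1/2)·((2x+3Δ)f(x) − (4x+4Δ)f(x+Δ) + (2x+Δ)f(x+2Δ))/Δ² exists and equals f'(x) − x·f''(x). -/

import Mathlib

open Filter Topology

open Asymptotics Set

theorem peano_second_order {f : ℝ → ℝ} {x : ℝ} (hf : ContDiffAt ℝ 2 f x) :
    (fun h : ℝ => f (x + h) - f x - h * deriv f x - h ^ 2 / 2 * iteratedDeriv 2 f x)
      =o[𝓝 0] fun h => h ^ 2 := by
  -- neighborhood where f is differentiable
  obtain ⟨u, hu, hcd⟩ := hf.contDiffOn (m := 2) le_rfl (by simp)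
  obtain ⟨v, hvu, hvo, hxv⟩ := mem_nhds_iff.mp hu
  have hdiff : ∀ y ∈ v, HasDerivAt f (deriv f y) y := by
    intro y hy
    have : DifferentiableAt ℝ f y := by
      have := ((hcd.mono hvu).differentiableOn (by norm_num)).differentiableAt
        (hvo.mem_nhds hy)
      exact this
    exact this.hasDerivAt
  -- second derivative
  have hd2 : HasDerivAt (deriv f) (iteratedDeriv 2 f x) x := by
    have h1 : ContDiffOn ℝ 1 (deriv f) v := by
      have := (hcd.mono hvu).deriv_of_isOpen hvo (m := 1) (by norm_num)
      exact this
    have hdd : DifferentiableAt ℝ (deriv f) x :=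
      ((h1.differentiableOn (by norm_num)).differentiableAt (hvo.mem_nhds hxv))
    have : iteratedDeriv 2 f x = deriv (deriv f) x := by
      rw [show (2:ℕ) = 1 + 1 from rfl, iteratedDeriv_succ, iteratedDeriv_one]
    rw [this]
    exact hdd.hasDerivAt
  rw [isLittleO_iff]
  intro ε hε
  -- from hd2 : slope bound
  have hslope := (hasDerivAt_iff_isLittleO.mp hd2)
  rw [isLittleO_iff] at hslope
  have hsl := hslope (half_pos hε)
  -- pull back to 𝓝 0
  have hmem : {y : ℝ | ‖deriv f y - deriv f x - (y - x) * iteratedDeriv 2 f x‖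
      ≤ ε / 2 * ‖y - x‖} ∩ v ∈ 𝓝 x := by
    refine inter_mem ?_ (hvo.mem_nhds hxv)
    filter_upwards [hsl] with y hy
    simpa [smul_eq_mul, mul_comm] using hy
  obtain ⟨δ, hδ, hball⟩ := Metric.mem_nhds_iff.mp hmem
  have key : ∀ h : ℝ, |h| < δ →
      ‖f (x + h) - f x - h * deriv f x - h ^ 2 / 2 * iteratedDeriv 2 f x‖ ≤ ε / 2 * ‖h‖ * ‖h‖ := by
    intro h hh
    set g : ℝ → ℝ := fun t => f (x + t) - f x - t * deriv f x - t ^ 2 / 2 * iteratedDeriv 2 f x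
      with hg
    have hginterval : ∀ t ∈ uIcc (0:ℝ) h, HasDerivWithinAt g
        (deriv f (x + t) - deriv f x - t * iteratedDeriv 2 f x) (uIcc (0:ℝ) h) t := by
      intro t ht
      have htδ : |t| ≤ |h| := abs_le.mpr
        ⟨le_trans (le_inf (neg_nonpos.mpr (abs_nonneg h)) (neg_abs_le h)) ht.1,
         le_trans ht.2 (sup_le (abs_nonneg h) (le_abs_self h))⟩
      have hmemv : x + t ∈ v := by
        have : x + t ∈ Metric.ball x δ := by
          simp only [Metric.mem_ball, Real.dist_eq, add_sub_cancel_left]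
          exact lt_of_le_of_lt htδ hh
        exact (hball this).2
      have hfd : HasDerivAt (fun s : ℝ => f (x + s)) (deriv f (x + t)) t := by
        have := (hdiff (x + t) hmemv).comp t ((hasDerivAt_id t).const_add x)
        simpa [Function.comp_def] using this
      have : HasDerivAt g (deriv f (x + t) - deriv f x - t * iteratedDeriv 2 f x) t := by
        have h2 : HasDerivAt (fun s : ℝ => s * deriv f x) (deriv f x) t := by
          simpa using (hasDerivAt_id t).mul_const (deriv f x)
        have h3 : HasDerivAt (fun s : ℝ => s ^ 2 / 2 * iteratedDeriv 2 f x)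
            (t * iteratedDeriv 2 f x) t := by
          have := ((hasDerivAt_pow 2 t).div_const 2).mul_const (iteratedDeriv 2 f x)
          simpa [mul_comm, mul_assoc] using this
        exact ((hfd.sub_const (f x)).sub h2).sub h3
      exact this.hasDerivWithinAt
    have hbound : ∀ t ∈ uIcc (0:ℝ) h,
        ‖deriv f (x + t) - deriv f x - t * iteratedDeriv 2 f x‖ ≤ ε / 2 * ‖h‖ := by
      intro t ht
      have htδ : |t| ≤ |h| := abs_le.mpr
        ⟨le_trans (le_inf (neg_nonpos.mpr (abs_nonneg h)) (neg_abs_le h)) ht.1,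
         le_trans ht.2 (sup_le (abs_nonneg h) (le_abs_self h))⟩
      have hmemb : x + t ∈ Metric.ball x δ := by
        simp only [Metric.mem_ball, Real.dist_eq, add_sub_cancel_left]
        exact lt_of_le_of_lt htδ hh
      have h1 := (hball hmemb).1
      simp only [add_sub_cancel_left, mem_setOf_eq] at h1
      calc ‖deriv f (x + t) - deriv f x - t * iteratedDeriv 2 f x‖
          ≤ ε / 2 * ‖t‖ := h1
        _ ≤ ε / 2 * ‖h‖ := by
            apply mul_le_mul_of_nonneg_left _ (le_of_lt (half_pos hε))
            simpa [Real.norm_eq_abs] using htδ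
    have := (convex_uIcc (0:ℝ) h).norm_image_sub_le_of_norm_hasDerivWithin_le
      hginterval hbound (left_mem_uIcc) (right_mem_uIcc)
    simpa [hg] using this
  rw [Metric.eventually_nhds_iff]
  refine ⟨δ, hδ, fun h hh => ?_⟩
  simp only [Real.dist_eq, sub_zero] at hh
  calc ‖f (x + h) - f x - h * deriv f x - h ^ 2 / 2 * iteratedDeriv 2 f x‖
      ≤ ε / 2 * ‖h‖ * ‖h‖ := key h hh
    _ ≤ ε * ‖h ^ 2‖ := by
        have : ε / 2 * ‖h‖ * ‖h‖ = ε / 2 * ‖h ^ 2‖ := by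
          simp only [Real.norm_eq_abs, pow_two, abs_mul]; ring
        rw [this]
        have h0 : (0:ℝ) ≤ ‖h ^ 2‖ := norm_nonneg _
        nlinarith

theorem parabolic_derivative_a1 (f : ℝ → ℝ) (x : ℝ) (hf : ContDiffAt ℝ 2 f x) :
    Tendsto (fun Δ : ℝ =>
        -(1 / 2) * ((2 * x + 3 * Δ) * f x - (4 * x + 4 * Δ) * f (x + Δ)
          + (2 * x + Δ) * f (x + 2 * Δ)) / Δ ^ 2)
      (𝓝[≠] 0) (𝓝 (deriv f x - x * iteratedDeriv 2 f x)) := by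
  set f1 := deriv f x with hf1
  set f2 := iteratedDeriv 2 f x with hf2
  set g : ℝ → ℝ := fun h => f (x + h) - f x - h * f1 - h ^ 2 / 2 * f2 with hg
  have hpeano : g =o[𝓝 0] fun h => h ^ 2 := peano_second_order hf
  have t1 : Tendsto (fun Δ : ℝ => g Δ / Δ ^ 2) (𝓝[≠] 0) (𝓝 0) :=
    hpeano.tendsto_div_nhds_zero.mono_left nhdsWithin_le_nhds
  have t2 : Tendsto (fun Δ : ℝ => g (2 * Δ) / Δ ^ 2) (𝓝[≠] 0) (𝓝 0) := by
    have hcomp : (fun Δ : ℝ => g (2 * Δ)) =o[𝓝 0] fun Δ : ℝ => (2 * Δ) ^ 2 := by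
      have h2 : Tendsto (fun Δ : ℝ => 2 * Δ) (𝓝 0) (𝓝 0) := by
        have := tendsto_id (x := 𝓝 (0:ℝ)) |>.const_mul 2
        simpa using this
      exact hpeano.comp_tendsto h2
    have hbig : (fun Δ : ℝ => (2 * Δ) ^ 2) =O[𝓝 0] fun Δ : ℝ => Δ ^ 2 := by
      have : (fun Δ : ℝ => (2 * Δ) ^ 2) = fun Δ : ℝ => 4 * Δ ^ 2 := by
        funext Δ; ring
      rw [this]
      exact (Asymptotics.isBigO_refl (fun Δ : ℝ => Δ ^ 2) _).const_mul_left 4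
    exact (hcomp.trans_isBigO hbig).tendsto_div_nhds_zero.mono_left nhdsWithin_le_nhds
  have c1 : Tendsto (fun Δ : ℝ => 4 * x + 4 * Δ) (𝓝[≠] 0) (𝓝 (4 * x)) := by
    apply Tendsto.mono_left _ nhdsWithin_le_nhds
    have : Continuous fun Δ : ℝ => 4 * x + 4 * Δ := by continuity
    simpa using this.tendsto 0
  have c2 : Tendsto (fun Δ : ℝ => 2 * x + Δ) (𝓝[≠] 0) (𝓝 (2 * x)) := by
    apply Tendsto.mono_left _ nhdsWithin_le_nhds
    have : Continuous fun Δ : ℝ => 2 * x + Δ := by continuity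
    simpa using this.tendsto 0
  have T : Tendsto (fun Δ : ℝ => (f1 - x * f2)
      + ((4 * x + 4 * Δ) * (g Δ / Δ ^ 2) - (2 * x + Δ) * (g (2 * Δ) / Δ ^ 2)) / 2)
      (𝓝[≠] 0) (𝓝 (f1 - x * f2)) := by
    have := (tendsto_const_nhds (x := f1 - x * f2) (f := 𝓝[≠] (0:ℝ))).add
      (((c1.mul t1).sub (c2.mul t2)).div_const 2)
    simpa using this
  apply T.congr'
  filter_upwards [self_mem_nhdsWithin] with Δ hΔ
  have hΔ0 : Δ ≠ 0 := hΔ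
  simp only [hg]
  field_simp
  ring
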